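/- Let K ⊆ ℝ² be a convex set whose two-dimensional Lebesgue measure (area) is strictly less than 1/2. Then the integer points of K are collinear: there exists a line in ℝ² containing K ∩ ℤ² (equivalently, the affine dimension of the convex hull of K ∩ ℤ² is at most 1). -/

import Mathlib

open MeasureTheory

noncomputable def Lmap (u v : ℝ×ℝ) : ℝ×ℝ →ₗ[ℝ] ℝ×ℝ where
  toFun w := (w.1 * u.1 + w.2 * v.1, w.1 * u.2 + w.2 * v.2)
  map_add' a b := by simp [Prod.ext_iff]; constructor <;> ring
  map_smul' c a := by simp [Prod.ext_iff, Prod.smul_def]; constructor <;> ring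

theorem Lmap_det (u v : ℝ×ℝ) : LinearMap.det (Lmap u v) = u.1 * v.2 - u.2 * v.1 := by
  rw [← LinearMap.det_toMatrix (Module.Basis.finTwoProd ℝ), Matrix.det_fin_two]
  simp [LinearMap.toMatrix_apply, Lmap, Module.Basis.coe_finTwoProd_repr]
  ring

theorem vol_reflect (c : ℝ×ℝ) (s : Set (ℝ×ℝ)) : volume ((fun x => c - x) '' s) = volume s := by
  have h : (fun x => c - x) '' s = (fun x => c + x) '' (-s) := by
    ext x
    constructor
    · rintro ⟨y, hy, rfl⟩; exact ⟨-y, by simpa [Set.mem_neg], by abel_nf⟩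
    · rintro ⟨y, hy, rfl⟩; exact ⟨-y, by simpa [Set.mem_neg] using hy, by abel_nf⟩
  rw [h, Set.image_add_left, measure_preimage_add, Measure.measure_neg]

theorem vol_translate (c : ℝ×ℝ) (s : Set (ℝ×ℝ)) : volume ((fun x => c + x) '' s) = volume s := by
  rw [Set.image_add_left, measure_preimage_add]

theorem stmt_4 (K : Set (ℝ × ℝ)) (hK : Convex ℝ K)
    (hvol : MeasureTheory.volume K < 1 / 2) :
    ∃ a b c : ℝ, (a, b) ≠ (0, 0) ∧
      ∀ x ∈ K, (∃ p q : ℤ, x = ((p : ℝ), (q : ℝ))) → a * x.1 + b * x.2 = c := by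
  by_contra hcon
  push_neg at hcon
  -- get a lattice point p
  obtain ⟨p, hpK, ⟨p1, p2, hp⟩, -⟩ := hcon 1 0 0 (by simp)
  -- get a lattice point q with q.1 ≠ p.1
  obtain ⟨q, hqK, ⟨q1, q2, hq⟩, hq'⟩ := hcon 1 0 p.1 (by simp)
  have hq1 : q.1 ≠ p.1 := by simpa using hq'
  -- line through p and q
  set a : ℝ := q.2 - p.2 with ha
  set b : ℝ := -(q.1 - p.1) with hb
  have hab : (a, b) ≠ (0, 0) := by
    intro h
    have hb0 : b = 0 := (Prod.mk.injEq _ _ _ _ ▸ h).2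
    rw [hb, neg_eq_zero, sub_eq_zero] at hb0
    exact hq1 hb0
  obtain ⟨r, hrK, ⟨r1, r2, hr⟩, hr'⟩ := hcon a b (a * p.1 + b * p.2) hab
  -- the integer determinant
  set D : ℤ := (q2 - p2) * (r1 - p1) - (q1 - p1) * (r2 - p2) with hD
  have hcoord : p.1 = (p1:ℝ) ∧ p.2 = (p2:ℝ) ∧ q.1 = (q1:ℝ) ∧ q.2 = (q2:ℝ)
      ∧ r.1 = (r1:ℝ) ∧ r.2 = (r2:ℝ) := by
    refine ⟨?_, ?_, ?_, ?_, ?_, ?_⟩ <;> simp [hp, hq, hr]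
  obtain ⟨e1, e2, e3, e4, e5, e6⟩ := hcoord
  have hDreal : (D : ℝ) = a * r.1 + b * r.2 - (a * p.1 + b * p.2) := by
    push_cast [hD]
    rw [ha, hb, e1, e2, e3, e4, e5, e6]; ring
  have hD0 : D ≠ 0 := by
    intro h
    apply hr'
    have := hDreal
    rw [h] at this
    push_cast at this
    linarith
  have hDge : (1:ℝ) ≤ |(D:ℝ)| := by
    have := Int.one_le_abs hD0
    calc (1:ℝ) ≤ (|D| : ℤ) := by exact_mod_cast this
    _ = |(D:ℝ)| := by push_cast; ring
  -- set up the linear map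
  set u : ℝ×ℝ := q - p with hu
  set v : ℝ×ℝ := r - p with hv
  set L : ℝ×ℝ →ₗ[ℝ] ℝ×ℝ := Lmap u v with hL
  have hdetL : |LinearMap.det L| = |(D:ℝ)| := by
    rw [hL, Lmap_det]
    have : u.1 * v.2 - u.2 * v.1 = -(D:ℝ) := by
      push_cast [hD]
      simp only [hu, hv, Prod.fst_sub, Prod.snd_sub]
      rw [e1, e2, e3, e4, e5, e6]; ring
    rw [this, abs_neg]
  -- the triangle
  set T0 : Set (ℝ×ℝ) := {w | 0 ≤ w.1 ∧ 0 ≤ w.2 ∧ w.1 + w.2 ≤ 1} with hT0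
  set T : Set (ℝ×ℝ) := (fun w => p + L w) '' T0 with hT
  -- triangle is inside K
  have hTK : T ⊆ K := by
    rintro x ⟨⟨s, t⟩, ⟨hs, ht, hst⟩, rfl⟩
    simp only at hs ht hst
    by_cases h0 : s + t = 0
    · have hs0 : s = 0 := by linarith
      have ht0 : t = 0 := by linarith
      have : p + L (s, t) = p := by
        simp [hL, Lmap, hs0, ht0]
      show p + L (s, t) ∈ K
      rw [this]; exact hpK
    · have hstpos : 0 < s + t := lt_of_le_of_ne (by linarith) (Ne.symm h0)
      have hw : (s/(s+t)) • q + (t/(s+t)) • r ∈ K := by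
        apply hK hqK hrK (by positivity) (by positivity)
        field_simp
      have hfin : (1 - (s+t)) • p + (s+t) • ((s/(s+t)) • q + (t/(s+t)) • r) ∈ K :=
        hK hpK hw (by linarith) (by linarith) (by ring)
      have heq : p + L (s, t)
          = (1 - (s+t)) • p + (s+t) • ((s/(s+t)) • q + (t/(s+t)) • r) := by
        simp only [hL, Lmap, LinearMap.coe_mk, AddHom.coe_mk, Prod.ext_iff,
          Prod.fst_add, Prod.snd_add, Prod.smul_fst, Prod.smul_snd, smul_eq_mul,
          hu, hv, Prod.fst_sub, Prod.snd_sub]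
        constructor <;> field_simp <;> ring
      show p + L (s, t) ∈ K
      rw [heq]; exact hfin
  -- the parallelogram
  set P : Set (ℝ×ℝ) := (fun w => p + L w) '' Set.Icc (0,0) (1,1) with hP
  have hPvol : volume P = ENNReal.ofReal |(D:ℝ)| := by
    rw [hP, show (fun w => p + L w) = (fun x => p + x) ∘ (fun w => L w) by rfl,
      Set.image_comp, vol_translate, Measure.addHaar_image_linearMap, hdetL]
    have : volume (Set.Icc ((0:ℝ),(0:ℝ)) (1,1)) = 1 := by
      rw [Set.Icc_prod_eq, Measure.volume_eq_prod, Measure.prod_prod]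
      simp
    rw [this, mul_one]
  -- P ⊆ T ∪ σ(T)
  set σ : ℝ×ℝ → ℝ×ℝ := fun x => (q + r) - x with hσ
  have hPsub : P ⊆ T ∪ σ '' T := by
    rintro x ⟨⟨s, t⟩, hst, rfl⟩
    rw [Set.mem_Icc] at hst
    obtain ⟨⟨hs0, ht0⟩, hs1, ht1⟩ := hst
    simp only at hs0 ht0 hs1 ht1
    by_cases h1 : s + t ≤ 1
    · exact Or.inl ⟨(s, t), ⟨hs0, ht0, h1⟩, rfl⟩
    · refine Or.inr ⟨p + L (1 - s, 1 - t),
        ⟨(1 - s, 1 - t), ⟨show (0:ℝ) ≤ 1 - s by linarith, show (0:ℝ) ≤ 1 - t by linarith, show (1:ℝ) - s + (1 - t) ≤ 1 by linarith⟩, rfl⟩, ?_⟩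
      simp only [hσ, hL, Lmap, LinearMap.coe_mk, AddHom.coe_mk, Prod.ext_iff,
        Prod.fst_sub, Prod.snd_sub, Prod.fst_add, Prod.snd_add,
        hu, hv]
      constructor <;> ring
  -- volumes
  have hσT : volume (σ '' T) = volume T := vol_reflect _ _
  have hTvol : volume T ≤ volume K := measure_mono hTK
  have hchain : ENNReal.ofReal |(D:ℝ)| ≤ 2 * volume K := by
    calc ENNReal.ofReal |(D:ℝ)| = volume P := hPvol.symm
      _ ≤ volume (T ∪ σ '' T) := measure_mono hPsub
      _ ≤ volume T + volume (σ '' T) := measure_union_le _ _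
      _ = volume T + volume T := by rw [hσT]
      _ = 2 * volume T := by ring
      _ ≤ 2 * volume K := by gcongr
  have h1le : (1:ENNReal) ≤ 2 * volume K := by
    refine le_trans ?_ hchain
    exact ENNReal.one_le_ofReal.mpr hDge
  have : (2:ENNReal) * volume K < 1 := by
    calc (2:ENNReal) * volume K < 2 * (1/2) := by
          apply ENNReal.mul_lt_mul_iff_right (by norm_num) (by norm_num) |>.mpr hvol
      _ = 1 := by
          rw [one_div]
          exact ENNReal.mul_inv_cancel (by norm_num) (by norm_num)
  exact absurd h1le (not_le.mpr this)
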